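/- Let M be the (2d+1)×(2d+1) incidence matrix of φ as above, and h = (1,...,1,2^0,...,2^d). Then h·(3I - M)^{-1}·e_0 = 3^d/(3^d - 1). In particular the vector (3I-M)^{-1}e_0 equals (2/(3^(2d)-1))·(3^(2d-1), 3^(2d-2), ..., 3, 1, 1)^T. -/

import Mathlib

open Matrix

/-- The incidence matrix of the morphism φ. -/
def Mmat (d : ℕ) : Matrix (Fin (2 * d + 1)) (Fin (2 * d + 1)) ℝ :=
  Matrix.of fun i j =>
    if (i : ℕ) = 0 then 1
    else if (i : ℕ) = (j : ℕ) + 1 then 1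
    else if (i : ℕ) = 2 * d ∧ (j : ℕ) = 2 * d then 2
    else 0

/-- The first standard basis vector `e₀`. -/
def e₀ (d : ℕ) : Fin (2 * d + 1) → ℝ := Pi.single 0 1

namespace Stmt18Aux

lemma geomS (n : ℕ) : ∑ k ∈ Finset.range n, (3:ℝ) ^ (n - 1 - k) = (3 ^ n - 1) / 2 := by
  induction n with
  | zero => simp
  | succ n ih =>
    rw [Finset.sum_range_succ]
    have h1 : ∀ k ∈ Finset.range n, (3:ℝ) ^ (n + 1 - 1 - k) = 3 ^ (n - 1 - k) * 3 := by
      intro k hk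
      rw [Finset.mem_range] at hk
      rw [show n + 1 - 1 - k = (n - 1 - k) + 1 by omega, pow_succ]
    rw [Finset.sum_congr rfl h1, ← Finset.sum_mul, ih,
      show n + 1 - 1 - n = 0 by omega, pow_zero, pow_succ]
    ring

lemma mixS (n : ℕ) : ∑ k ∈ Finset.range n, (2:ℝ) ^ k * 3 ^ (n - 1 - k) = 3 ^ n - 2 ^ n := by
  induction n with
  | zero => simp
  | succ n ih =>
    rw [Finset.sum_range_succ]
    have h1 : ∀ k ∈ Finset.range n, (2:ℝ) ^ k * 3 ^ (n + 1 - 1 - k)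
        = (2 ^ k * 3 ^ (n - 1 - k)) * 3 := by
      intro k hk
      rw [Finset.mem_range] at hk
      rw [show n + 1 - 1 - k = (n - 1 - k) + 1 by omega, pow_succ]
      ring
    rw [Finset.sum_congr rfl h1, ← Finset.sum_mul, ih,
      show n + 1 - 1 - n = 0 by omega, pow_zero, pow_succ, pow_succ]
    ring

/-- The candidate solution vector. -/
noncomputable def vvec (d : ℕ) : Fin (2 * d + 1) → ℝ := fun i =>
  2 / (3 ^ (2 * d) - 1) * (if (i : ℕ) < 2 * d then 3 ^ (2 * d - 1 - (i : ℕ)) else 1)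

lemma three_apply (d : ℕ) (i j : Fin (2 * d + 1)) :
    (3 : Matrix (Fin (2 * d + 1)) (Fin (2 * d + 1)) ℝ) i j = if i = j then 3 else 0 := by
  rw [← Matrix.diagonal_ofNat]
  simp [Matrix.diagonal_apply]

/-- Row-wise description of `(3 - Mmat d).mulVec w`. -/
lemma key (d : ℕ) (hd : 1 ≤ d) (w : Fin (2 * d + 1) → ℝ) (i : Fin (2 * d + 1)) :
    ((3 - Mmat d).mulVec w) i = 3 * w i -
      (if (i : ℕ) = 0 then ∑ j, w j
       else if (i : ℕ) = 2 * d then w ⟨2 * d - 1, by omega⟩ + 2 * w i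
       else w ⟨(i : ℕ) - 1, by omega⟩) := by
  have hsum : ∀ j : Fin (2 * d + 1), ((3 - Mmat d) i j) * w j
      = (if j = i then 3 * w j else 0) - Mmat d i j * w j := by
    intro j
    rw [Matrix.sub_apply, three_apply]
    by_cases hji : j = i
    · subst hji; simp; ring
    · have : ¬ i = j := fun hc => hji hc.symm
      simp [this, hji]
  rw [show ((3 - Mmat d).mulVec w) i = ∑ j, ((3 - Mmat d) i j) * w j from rfl,
    Finset.sum_congr rfl (fun j _ => hsum j), Finset.sum_sub_distrib,
    Finset.sum_ite_eq' Finset.univ i (fun j => 3 * w j)]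
  simp only [Finset.mem_univ, if_true]
  congr 1
  -- remains: ∑ j, Mmat d i j * w j = RHS cases
  by_cases hi0 : (i : ℕ) = 0
  · rw [if_pos hi0]
    apply Finset.sum_congr rfl
    intro j _
    simp [Mmat, hi0]
    intro hc; exact absurd (Fin.ext (by simp [hi0])) hc
  · rw [if_neg hi0]
    by_cases hid : (i : ℕ) = 2 * d
    · rw [if_pos hid]
      have hie : i = (⟨2 * d, by omega⟩ : Fin (2 * d + 1)) := Fin.ext hid
      have hstep : ∀ j : Fin (2 * d + 1), Mmat d i j * w j
          = (if j = (⟨2 * d - 1, by omega⟩ : Fin (2 * d + 1)) then w j else 0)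
            + (if j = (⟨2 * d, by omega⟩ : Fin (2 * d + 1)) then 2 * w j else 0) := by
        intro j
        show (if (i : ℕ) = 0 then 1
          else if (i : ℕ) = (j : ℕ) + 1 then 1
          else if (i : ℕ) = 2 * d ∧ (j : ℕ) = 2 * d then (2:ℝ)
          else 0) * w j = _
        rw [if_neg hi0]
        rcases eq_or_ne (j : ℕ) (2 * d - 1) with hj | hj
        · have h1 : j = (⟨2 * d - 1, by omega⟩ : Fin (2 * d + 1)) := Fin.ext hj
          have h2 : j ≠ (⟨2 * d, by omega⟩ : Fin (2 * d + 1)) := by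
            intro hc
            have := congrArg (Fin.val) hc
            simp at this
            omega
          have h3 : (i : ℕ) = (j : ℕ) + 1 := by omega
          rw [if_pos h3, if_pos h1, if_neg h2]
          ring
        · rcases eq_or_ne (j : ℕ) (2 * d) with hj2 | hj2
          · have h1 : j = (⟨2 * d, by omega⟩ : Fin (2 * d + 1)) := Fin.ext hj2
            have h2 : j ≠ (⟨2 * d - 1, by omega⟩ : Fin (2 * d + 1)) := by
              intro hc
              have := congrArg (Fin.val) hc
              simp at this
              omega
            have h3 : ¬ ((i : ℕ) = (j : ℕ) + 1) := by omega
            rw [if_neg h3, if_pos ⟨hid, hj2⟩, if_neg h2, if_pos h1]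
            ring
          · have h1 : j ≠ (⟨2 * d, by omega⟩ : Fin (2 * d + 1)) := by
              intro hc
              have := congrArg (Fin.val) hc
              simp at this
              omega
            have h2 : j ≠ (⟨2 * d - 1, by omega⟩ : Fin (2 * d + 1)) := by
              intro hc
              have := congrArg (Fin.val) hc
              simp at this
              omega
            have h3 : ¬ ((i : ℕ) = (j : ℕ) + 1) := by omega
            have h4 : ¬ ((i : ℕ) = 2 * d ∧ (j : ℕ) = 2 * d) := fun hc => hj2 hc.2
            rw [if_neg h3, if_neg h4, if_neg h1, if_neg h2]
            ring
      rw [Finset.sum_congr rfl (fun j _ => hstep j), Finset.sum_add_distrib,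
        Finset.sum_ite_eq' Finset.univ _ (fun j => w j),
        Finset.sum_ite_eq' Finset.univ _ (fun j => 2 * w j)]
      simp only [Finset.mem_univ, if_true]
      rw [← hie]
    · rw [if_neg hid]
      rw [Finset.sum_eq_single (⟨(i : ℕ) - 1, by omega⟩ : Fin (2 * d + 1))]
      · have hco : ((⟨(i : ℕ) - 1, by omega⟩ : Fin (2 * d + 1)) : ℕ) = (i : ℕ) - 1 := rfl
        have : (i : ℕ) = ((⟨(i : ℕ) - 1, by omega⟩ : Fin (2 * d + 1)) : ℕ) + 1 := by
          rw [hco]; omega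
        show (if (i : ℕ) = 0 then 1
          else if (i : ℕ) = ((⟨(i : ℕ) - 1, by omega⟩ : Fin (2 * d + 1)) : ℕ) + 1 then 1
          else if (i : ℕ) = 2 * d ∧ ((⟨(i : ℕ) - 1, by omega⟩ : Fin (2 * d + 1)) : ℕ) = 2 * d then (2:ℝ)
          else 0) * w _ = w _
        rw [if_neg hi0, if_pos this, one_mul]
      · intro j _ hj
        have hne : ¬ ((i : ℕ) = (j : ℕ) + 1) := by
          intro hc
          apply hj
          apply Fin.ext
          show (j : ℕ) = (i : ℕ) - 1
          omega
        have hne2 : ¬ ((i : ℕ) = 2 * d ∧ (j : ℕ) = 2 * d) := by tauto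
        simp [Mmat, hi0, hne, hne2]
        intro hc; exact absurd (by simp [hc]) hi0
      · intro hc; exact absurd (Finset.mem_univ _) hc

lemma pow_gt_one (d : ℕ) (hd : 1 ≤ d) : (1:ℝ) < 3 ^ (2 * d) := by
  apply one_lt_pow₀ (by norm_num) (by omega)

lemma denom_ne (d : ℕ) (hd : 1 ≤ d) : (3:ℝ) ^ (2 * d) - 1 ≠ 0 := by
  have := pow_gt_one d hd; linarith

lemma sum_vvec (d : ℕ) (hd : 1 ≤ d) :
    ∑ j, vvec d j = 2 / (3 ^ (2 * d) - 1) * ((3 ^ (2 * d) - 1) / 2 + 1) := by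
  unfold vvec
  rw [← Finset.mul_sum]
  congr 1
  rw [Fin.sum_univ_eq_sum_range (fun k => if k < 2 * d then (3:ℝ) ^ (2 * d - 1 - k) else 1),
    Finset.sum_range_succ]
  have h1 : ∀ k ∈ Finset.range (2 * d), (if k < 2 * d then (3:ℝ) ^ (2 * d - 1 - k) else 1)
      = 3 ^ (2 * d - 1 - k) := by
    intro k hk; rw [Finset.mem_range] at hk; simp [hk]
  rw [Finset.sum_congr rfl h1, geomS, if_neg (lt_irrefl _)]

lemma vvec_lt (d : ℕ) (k : ℕ) (hk : k < 2 * d) (hk2 : k < 2 * d + 1) :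
    vvec d ⟨k, hk2⟩ = 2 / (3 ^ (2 * d) - 1) * 3 ^ (2 * d - 1 - k) := by
  unfold vvec
  rw [if_pos]
  exact hk

lemma vvec_last (d : ℕ) (hk2 : 2 * d < 2 * d + 1) :
    vvec d ⟨2 * d, hk2⟩ = 2 / (3 ^ (2 * d) - 1) := by
  unfold vvec
  rw [if_neg (lt_irrefl _), mul_one]

lemma mulVec_v (d : ℕ) (hd : 1 ≤ d) : (3 - Mmat d).mulVec (vvec d) = e₀ d := by
  funext i
  rw [key d hd]
  have hne := denom_ne d hd
  have hiv : i = (⟨(i : ℕ), i.isLt⟩ : Fin (2 * d + 1)) := rfl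
  by_cases hi0 : (i : ℕ) = 0
  · rw [if_pos hi0, sum_vvec d hd]
    have hv0 : vvec d i = 2 / (3 ^ (2 * d) - 1) * 3 ^ (2 * d - 1) := by
      rw [hiv]
      have := vvec_lt d (i : ℕ) (by omega) i.isLt
      rw [this, hi0, Nat.sub_zero]
    have hie : i = 0 := Fin.ext hi0
    have he : e₀ d i = 1 := by rw [hie]; simp [e₀]
    rw [hv0, he]
    have h3 : (3:ℝ) * 3 ^ (2 * d - 1) = 3 ^ (2 * d) := by
      rw [← pow_succ']
      congr 1
      omega
    rw [show (3:ℝ) * (2 / (3 ^ (2 * d) - 1) * 3 ^ (2 * d - 1))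
        = 2 / (3 ^ (2 * d) - 1) * (3 * 3 ^ (2 * d - 1)) by ring, h3]
    field_simp
    ring
  · have he : e₀ d i = 0 := by
      unfold e₀
      rw [Pi.single_apply]
      rw [if_neg]
      intro hc
      exact hi0 (by rw [hc]; rfl)
    rw [he, if_neg hi0]
    by_cases hid : (i : ℕ) = 2 * d
    · rw [if_pos hid]
      have hv1 : vvec d i = 2 / (3 ^ (2 * d) - 1) := by
        rw [hiv]
        have : (⟨(i : ℕ), i.isLt⟩ : Fin (2 * d + 1)) = ⟨2 * d, by omega⟩ := Fin.ext hid
        rw [this, vvec_last]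
      have hv2 : vvec d (⟨2 * d - 1, by omega⟩ : Fin (2 * d + 1))
          = 2 / (3 ^ (2 * d) - 1) := by
        rw [vvec_lt d (2 * d - 1) (by omega),
          show 2 * d - 1 - (2 * d - 1) = 0 by omega, pow_zero, mul_one]
      rw [hv1, hv2]
      ring
    · rw [if_neg hid]
      have hlt : (i : ℕ) < 2 * d := by omega
      have hv1 : vvec d i = 2 / (3 ^ (2 * d) - 1) * 3 ^ (2 * d - 1 - (i : ℕ)) := by
        rw [hiv, vvec_lt d (i : ℕ) hlt]
      have hv2 : vvec d (⟨(i : ℕ) - 1, by omega⟩ : Fin (2 * d + 1))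
          = 2 / (3 ^ (2 * d) - 1) * 3 ^ (2 * d - (i : ℕ)) := by
        rw [vvec_lt d ((i : ℕ) - 1) (by omega)]
        congr 2
        omega
      rw [hv1, hv2]
      have h3 : (3:ℝ) ^ (2 * d - (i : ℕ)) = 3 * 3 ^ (2 * d - 1 - (i : ℕ)) := by
        rw [← pow_succ']
        congr 1
        omega
      rw [h3]
      ring

end Stmt18Aux

namespace Stmt18Aux

lemma ker (d : ℕ) (hd : 1 ≤ d) (x : Fin (2 * d + 1) → ℝ)
    (hx : (3 - Mmat d).mulVec x = 0) : x = 0 := by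
  have hrow : ∀ i : Fin (2 * d + 1), 3 * x i -
      (if (i : ℕ) = 0 then ∑ j, x j
       else if (i : ℕ) = 2 * d then x ⟨2 * d - 1, by omega⟩ + 2 * x i
       else x ⟨(i : ℕ) - 1, by omega⟩) = 0 := by
    intro i
    rw [← key d hd x i, hx]
    rfl
  set t := x ⟨2 * d, by omega⟩ with ht
  have claim : ∀ k : ℕ, k ≤ 2 * d - 1 → x ⟨2 * d - 1 - k, by omega⟩ = 3 ^ k * t := by
    intro k
    induction k with
    | zero =>
      intro _
      have h := hrow ⟨2 * d, by omega⟩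
      rw [if_neg (show ¬ (2 * d = 0) by omega), if_pos rfl] at h
      show x ⟨2 * d - 1, by omega⟩ = 3 ^ 0 * t
      rw [pow_zero, one_mul, ht]
      linarith [h]
    | succ k ih =>
      intro hk
      have hk' : k ≤ 2 * d - 1 := by omega
      have h := hrow ⟨2 * d - 1 - k, by omega⟩
      rw [if_neg (show ¬ (2 * d - 1 - k = 0) by omega),
        if_neg (show ¬ (2 * d - 1 - k = 2 * d) by omega)] at h
      have hidx : (⟨2 * d - 1 - k - 1, by omega⟩ : Fin (2 * d + 1))
          = ⟨2 * d - 1 - (k + 1), by omega⟩ := by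
        apply Fin.ext
        show 2 * d - 1 - k - 1 = 2 * d - 1 - (k + 1)
        omega
      rw [hidx, ih hk'] at h
      rw [show (3:ℝ) ^ (k + 1) = 3 ^ k * 3 by rw [pow_succ]]
      linarith [h]
  have hs : x = (t * (3 ^ (2 * d) - 1) / 2) • vvec d := by
    funext i
    rw [Pi.smul_apply, smul_eq_mul]
    by_cases hid : (i : ℕ) = 2 * d
    · have hie : i = (⟨2 * d, by omega⟩ : Fin (2 * d + 1)) := Fin.ext hid
      rw [hie, vvec_last, ← ht]
      field_simp [denom_ne d hd]
    · have hlt : (i : ℕ) < 2 * d := by omega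
      have hie : i = (⟨2 * d - 1 - (2 * d - 1 - (i : ℕ)), by omega⟩ : Fin (2 * d + 1)) := by
        apply Fin.ext
        show (i : ℕ) = 2 * d - 1 - (2 * d - 1 - (i : ℕ))
        omega
      rw [hie, claim (2 * d - 1 - (i : ℕ)) (by omega),
        vvec_lt d _ (by omega), show 2 * d - 1 - (2 * d - 1 - (2 * d - 1 - (i : ℕ)))
          = 2 * d - 1 - (i : ℕ) by omega]
      field_simp [denom_ne d hd]
  have h0 : (t * (3 ^ (2 * d) - 1) / 2) • e₀ d = 0 := by
    rw [← mulVec_v d hd, ← Matrix.mulVec_smul, ← hs, hx]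
  have h0' : t * (3 ^ (2 * d) - 1) / 2 = 0 := by
    have := congrFun h0 0
    rw [Pi.smul_apply, smul_eq_mul] at this
    have he : e₀ d 0 = 1 := by simp [e₀]
    rw [he, mul_one] at this
    exact this
  have ht0 : t = 0 := by
    have hne := denom_ne d hd
    rcases mul_eq_zero.mp (by linarith [h0'] : t * (3 ^ (2 * d) - 1) = 0) with h | h
    · exact h
    · exact absurd h hne
  rw [hs, ht0]
  simp

lemma isunit (d : ℕ) (hd : 1 ≤ d) : IsUnit (3 - Mmat d).det := by
  rw [← Matrix.isUnit_iff_isUnit_det]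
  rw [← Matrix.mulVec_injective_iff_isUnit]
  intro a b hab
  have : (3 - Mmat d).mulVec (a - b) = 0 := by
    rw [Matrix.mulVec_sub, hab, sub_self]
  have := ker d hd _ this
  exact sub_eq_zero.mp this

lemma inv_e0 (d : ℕ) (hd : 1 ≤ d) : (3 - Mmat d)⁻¹.mulVec (e₀ d) = vvec d := by
  rw [← mulVec_v d hd, Matrix.mulVec_mulVec, Matrix.nonsing_inv_mul _ (isunit d hd),
    Matrix.one_mulVec]

end Stmt18Aux

theorem stmt_18 (d : ℕ) (hd : 1 ≤ d)
    (h : Fin (2 * d + 1) → ℝ)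
    (hh : ∀ i : Fin (2 * d + 1),
      h i = if (i : ℕ) < d then 1 else 2 ^ ((i : ℕ) - d)) :
    dotProduct h ((3 - Mmat d)⁻¹.mulVec (e₀ d)) = 3 ^ d / (3 ^ d - 1) ∧
    (3 - Mmat d)⁻¹.mulVec (e₀ d) = fun i : Fin (2 * d + 1) =>
      2 / (3 ^ (2 * d) - 1) *
        (if (i : ℕ) < 2 * d then 3 ^ (2 * d - 1 - (i : ℕ)) else 1) := by
  have hinv := Stmt18Aux.inv_e0 d hd
  constructor
  · rw [hinv, dotProduct]
    have hsummand : ∀ i : Fin (2 * d + 1), h i * Stmt18Aux.vvec d i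
        = (fun k : ℕ => (if k < d then (1:ℝ) else 2 ^ (k - d)) *
            (2 / (3 ^ (2 * d) - 1) * (if k < 2 * d then 3 ^ (2 * d - 1 - k) else 1)))
          (i : ℕ) := by
      intro i
      rw [hh i]
      rfl
    have hconv := Fin.sum_univ_eq_sum_range
      (fun k : ℕ => (if k < d then (1:ℝ) else 2 ^ (k - d)) *
        (2 / (3 ^ (2 * d) - 1) * (if k < 2 * d then 3 ^ (2 * d - 1 - k) else 1)))
      (2 * d + 1)
    rw [Finset.sum_congr rfl (fun i _ => hsummand i), hconv,
      Finset.sum_range_succ]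
    rw [if_neg (show ¬ (2 * d < d) by omega), if_neg (lt_irrefl (2 * d)),
      show 2 * d - d = d by omega]
    have hsplit : ∀ k ∈ Finset.range (2 * d),
        (if k < d then (1:ℝ) else 2 ^ (k - d)) *
          (2 / (3 ^ (2 * d) - 1) * (if k < 2 * d then 3 ^ (2 * d - 1 - k) else 1))
        = (if k < d then (1:ℝ) else 2 ^ (k - d)) *
          (2 / (3 ^ (2 * d) - 1) * 3 ^ (2 * d - 1 - k)) := by
      intro k hk
      rw [Finset.mem_range] at hk
      rw [if_pos hk]
    rw [Finset.sum_congr rfl hsplit, Finset.range_eq_Ico,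
      ← Finset.sum_Ico_consecutive _ (show 0 ≤ d by omega) (show d ≤ 2 * d by omega),
      ← Finset.range_eq_Ico, Finset.sum_Ico_eq_sum_range,
      show 2 * d - d = d by omega]
    have hA : ∀ k ∈ Finset.range d,
        (if k < d then (1:ℝ) else 2 ^ (k - d)) *
          (2 / (3 ^ (2 * d) - 1) * 3 ^ (2 * d - 1 - k))
        = (2 / (3 ^ (2 * d) - 1) * 3 ^ d) * 3 ^ (d - 1 - k) := by
      intro k hk
      rw [Finset.mem_range] at hk
      rw [if_pos hk, show 2 * d - 1 - k = d + (d - 1 - k) by omega, pow_add]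
      ring
    have hB : ∀ k ∈ Finset.range d,
        (if d + k < d then (1:ℝ) else 2 ^ (d + k - d)) *
          (2 / (3 ^ (2 * d) - 1) * 3 ^ (2 * d - 1 - (d + k)))
        = (2 / (3 ^ (2 * d) - 1)) * (2 ^ k * 3 ^ (d - 1 - k)) := by
      intro k hk
      rw [Finset.mem_range] at hk
      rw [if_neg (show ¬ (d + k < d) by omega), show d + k - d = k by omega,
        show 2 * d - 1 - (d + k) = d - 1 - k by omega]
      ring
    rw [Finset.sum_congr rfl hA, Finset.sum_congr rfl hB, ← Finset.mul_sum,
      ← Finset.mul_sum, Stmt18Aux.geomS, Stmt18Aux.mixS]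
    have h2 : (3:ℝ) ^ (2 * d) = 3 ^ d * 3 ^ d := by
      rw [two_mul, pow_add]
    have h3 : (3:ℝ) ^ d - 1 ≠ 0 := by
      have : (1:ℝ) < 3 ^ d := one_lt_pow₀ (by norm_num) (by omega)
      linarith
    have h4 : (3:ℝ) ^ d + 1 ≠ 0 := by positivity
    rw [h2]
    have h5 : (3:ℝ) ^ d * 3 ^ d - 1 = (3 ^ d - 1) * (3 ^ d + 1) := by ring
    rw [h5]
    field_simp
    ring
  · rw [hinv]
    rfl
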